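/- Let p > l, set γ₁ := p/(p−l), and let β > 0. Let Y ⊆ ℝ^{d2} be nonempty, fix z, z' ∈ ℝ^{d1}, suppose P(z) := sup_{y∈Y} Ψ(y,z) is finite and P(z') is attained at some ŷ*(z') ∈ Y. Then for every y' ∈ Y: 2(Ψ(y',z') − Ψ(y',z)) − 2(P(z') − P(z)) ≥ −(2pγ₁ + p/(6β))‖z' − z‖² − 6pβ‖x*(ŷ*(z'),z') − x*(y',z')‖². -/

import Mathlib

open Set Metric
open scoped RealInnerProductSpace

noncomputable def gradx {d1 d2 : ℕ}
    (f : EuclideanSpace ℝ (Fin d1) → EuclideanSpace ℝ (Fin d2) → ℝ)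
    (x : EuclideanSpace ℝ (Fin d1)) (y : EuclideanSpace ℝ (Fin d2)) :
    EuclideanSpace ℝ (Fin d1) :=
  gradient (fun x' => f x' y) x

noncomputable def grady {d1 d2 : ℕ}
    (f : EuclideanSpace ℝ (Fin d1) → EuclideanSpace ℝ (Fin d2) → ℝ)
    (x : EuclideanSpace ℝ (Fin d1)) (y : EuclideanSpace ℝ (Fin d2)) :
    EuclideanSpace ℝ (Fin d2) :=
  gradient (fun y' => f x y') y

/-- `f` is differentiable and `l`-smooth: the gradient is `l`-Lipschitz with respect to the
Euclidean norm on the product space (stated in squared form). -/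
def IsLSmooth {d1 d2 : ℕ} (l : ℝ)
    (f : EuclideanSpace ℝ (Fin d1) → EuclideanSpace ℝ (Fin d2) → ℝ) : Prop :=
  Differentiable ℝ (fun w : EuclideanSpace ℝ (Fin d1) × EuclideanSpace ℝ (Fin d2) => f w.1 w.2) ∧
  ∀ x₁ x₂ y₁ y₂,
    ‖gradx f x₁ y₁ - gradx f x₂ y₂‖ ^ 2 + ‖grady f x₁ y₁ - grady f x₂ y₂‖ ^ 2
      ≤ l ^ 2 * (‖x₁ - x₂‖ ^ 2 + ‖y₁ - y₂‖ ^ 2)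

/-- `f̂(x, y, z) = f(x, y) + (p/2)‖x − z‖²`. -/
noncomputable def fhat {d1 d2 : ℕ}
    (f : EuclideanSpace ℝ (Fin d1) → EuclideanSpace ℝ (Fin d2) → ℝ) (p : ℝ)
    (x : EuclideanSpace ℝ (Fin d1)) (y : EuclideanSpace ℝ (Fin d2))
    (z : EuclideanSpace ℝ (Fin d1)) : ℝ :=
  f x y + p / 2 * ‖x - z‖ ^ 2

section auxlemmas

lemma hasGradientAt_normsq {E : Type*} [NormedAddCommGroup E] [InnerProductSpace ℝ E]
    [CompleteSpace E] (z x₀ : E) :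
    HasGradientAt (fun x => ‖x - z‖ ^ 2) ((2:ℝ) • (x₀ - z)) x₀ := by
  rw [hasGradientAt_iff_hasFDerivAt]
  have h : HasFDerivAt (fun x : E => x - z) (ContinuousLinearMap.id ℝ E) x₀ :=
    (hasFDerivAt_id x₀).sub_const z
  have h2 := h.inner ℝ h
  have heq : (fun x : E => ‖x - z‖ ^ 2) = fun x => ⟪x - z, x - z⟫ := by
    funext x; rw [real_inner_self_eq_norm_sq]
  rw [heq]
  refine h2.congr_fderiv ?_
  symm
  ext v
  simp [fderivInnerCLM_apply, InnerProductSpace.toDual_apply_apply, real_inner_smul_left,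
    real_inner_comm]
  rw [inner_sub_right, real_inner_comm v x₀, real_inner_comm v z]
  ring

lemma grad_opt {d1 d2 : ℕ} (p : ℝ)
    (f : EuclideanSpace ℝ (Fin d1) → EuclideanSpace ℝ (Fin d2) → ℝ)
    (hdiff : Differentiable ℝ
      (fun w : EuclideanSpace ℝ (Fin d1) × EuclideanSpace ℝ (Fin d2) => f w.1 w.2))
    (y : EuclideanSpace ℝ (Fin d2)) (z x₀ : EuclideanSpace ℝ (Fin d1))
    (hmin : ∀ x, f x₀ y + p / 2 * ‖x₀ - z‖ ^ 2 ≤ f x y + p / 2 * ‖x - z‖ ^ 2) :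
    gradx f x₀ y + p • (x₀ - z) = 0 := by
  have hd : Differentiable ℝ (fun x => f x y) := by
    intro x
    exact (hdiff (x, y)).comp x ((differentiableAt_id (𝕜 := ℝ) (x := x)).prodMk (differentiableAt_const y))
  have h1 : HasGradientAt (fun x => f x y) (gradx f x₀ y) x₀ := (hd x₀).hasGradientAt
  have h1' := hasGradientAt_iff_hasFDerivAt.mp h1
  have h2' := hasGradientAt_iff_hasFDerivAt.mp (hasGradientAt_normsq z x₀)
  have h3 := h1'.add (h2'.const_mul (p / 2))
  have hF : HasFDerivAt (fun x => f x y + p / 2 * ‖x - z‖ ^ 2)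
      ((InnerProductSpace.toDual ℝ _) (gradx f x₀ y + p • (x₀ - z))) x₀ := by
    refine h3.congr_fderiv ?_
    symm
    rw [map_add, map_smul, map_smul, smul_smul]
    norm_num
  have hloc : IsLocalMin (fun x => f x y + p / 2 * ‖x - z‖ ^ 2) x₀ :=
    Filter.Eventually.of_forall hmin
  have hz := hloc.fderiv_eq_zero
  rw [hF.fderiv] at hz
  have := congrArg (InnerProductSpace.toDual ℝ _).symm hz
  simpa using this

lemma xstar_lip {d1 d2 : ℕ} (l p : ℝ) (hl : 0 < l) (hpl : l < p)
    (f : EuclideanSpace ℝ (Fin d1) → EuclideanSpace ℝ (Fin d2) → ℝ)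
    (hlip : ∀ (x₁ x₂ : EuclideanSpace ℝ (Fin d1)) (y : EuclideanSpace ℝ (Fin d2)),
      ‖gradx f x₁ y - gradx f x₂ y‖ ≤ l * ‖x₁ - x₂‖)
    (y : EuclideanSpace ℝ (Fin d2)) (z z' u v : EuclideanSpace ℝ (Fin d1))
    (hu : gradx f u y + p • (u - z) = 0) (hv : gradx f v y + p • (v - z') = 0) :
    ‖u - v‖ ≤ p / (p - l) * ‖z - z'‖ := by
  have hkey : gradx f u y - gradx f v y = p • ((z - z') - (u - v)) := by
    have h1 : gradx f u y = -(p • (u - z)) := by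
      rw [eq_neg_iff_add_eq_zero]; exact hu
    have h2 : gradx f v y = -(p • (v - z')) := by
      rw [eq_neg_iff_add_eq_zero]; exact hv
    rw [h1, h2]
    module
  have hinner : ⟪gradx f u y - gradx f v y, u - v⟫ =
      p * ⟪z - z', u - v⟫ - p * ‖u - v‖ ^ 2 := by
    rw [hkey, real_inner_smul_left, inner_sub_left, real_inner_self_eq_norm_sq]
    ring
  have hcs1 : ⟪gradx f u y - gradx f v y, u - v⟫ ≥ -(l * ‖u - v‖ * ‖u - v‖) := by
    have := abs_real_inner_le_norm (gradx f u y - gradx f v y) (u - v)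
    have h2 := hlip u v y
    have h3 := neg_abs_le ⟪gradx f u y - gradx f v y, u - v⟫
    nlinarith [norm_nonneg (u - v)]
  have hcs2 : ⟪z - z', u - v⟫ ≤ ‖z - z'‖ * ‖u - v‖ := real_inner_le_norm _ _
  have hmain : (p - l) * ‖u - v‖ ^ 2 ≤ p * (‖z - z'‖ * ‖u - v‖) := by nlinarith
  rcases eq_or_lt_of_le (norm_nonneg (u - v)) with h | h
  · rw [← h]
    have hp : 0 < p := hl.trans hpl
    have hpl' : 0 < p - l := by linarith
    positivity
  · rw [div_mul_eq_mul_div, le_div_iff₀ (by linarith)]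
    nlinarith

end auxlemmas

set_option maxHeartbeats 1000000 in
/-- for every `y' ∈ Y`,
`2(Ψ(y',z') − Ψ(y',z)) − 2(P(z') − P(z))
  ≥ −(2pγ₁ + p/(6β))‖z' − z‖² − 6pβ‖x*(ŷ*(z'),z') − x*(y',z')‖²`,
with `γ₁ = p/(p−l)`, `Ψ(y,z) = f̂(x*(y,z),y,z)`, `P(z) = sup_{y∈Y} Ψ(y,z)` finite and
`P(z')` attained at `ŷ*(z') ∈ Y`. -/
theorem statement4 {d1 d2 : ℕ} (l p β : ℝ) (hl : 0 < l) (hpl : l < p) (hβ : 0 < β)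
    (f : EuclideanSpace ℝ (Fin d1) → EuclideanSpace ℝ (Fin d2) → ℝ)
    (hf : IsLSmooth l f)
    (xstar : EuclideanSpace ℝ (Fin d2) → EuclideanSpace ℝ (Fin d1) → EuclideanSpace ℝ (Fin d1))
    (hxstar : ∀ y z x, fhat f p (xstar y z) y z ≤ fhat f p x y z)
    (Y : Set (EuclideanSpace ℝ (Fin d2))) (hYne : Y.Nonempty)
    (z z' : EuclideanSpace ℝ (Fin d1))
    -- `P(z) = sup_{y ∈ Y} Ψ(y, z)` is finite
    (Pz : ℝ) (hPz : IsLUB ((fun y => fhat f p (xstar y z) y z) '' Y) Pz)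
    -- `P(z')` is attained at `ŷ*(z') ∈ Y`
    (ystar : EuclideanSpace ℝ (Fin d2)) (hystarY : ystar ∈ Y)
    (hystar : ∀ y ∈ Y, fhat f p (xstar y z') y z' ≤ fhat f p (xstar ystar z') ystar z')
    (y' : EuclideanSpace ℝ (Fin d2)) (hy' : y' ∈ Y) :
    2 * (fhat f p (xstar y' z') y' z' - fhat f p (xstar y' z) y' z)
      - 2 * (fhat f p (xstar ystar z') ystar z' - Pz)
      ≥ -(2 * p * (p / (p - l)) + p / (6 * β)) * ‖z' - z‖ ^ 2
        - 6 * p * β * ‖xstar ystar z' - xstar y' z'‖ ^ 2 := by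
  have hp : 0 < p := hl.trans hpl
  -- gradient of f in x is l-Lipschitz in x
  have hglip : ∀ (x₁ x₂ : EuclideanSpace ℝ (Fin d1)) (y : EuclideanSpace ℝ (Fin d2)),
      ‖gradx f x₁ y - gradx f x₂ y‖ ≤ l * ‖x₁ - x₂‖ := by
    intro x₁ x₂ y
    have h := hf.2 x₁ x₂ y y
    simp only [sub_self, norm_zero] at h
    nlinarith [sq_nonneg (‖grady f x₁ y - grady f x₂ y‖),
      norm_nonneg (gradx f x₁ y - gradx f x₂ y), norm_nonneg (x₁ - x₂),
      mul_nonneg hl.le (norm_nonneg (x₁ - x₂))]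
  -- first-order optimality at the minimizers
  have hopt : ∀ (y : EuclideanSpace ℝ (Fin d2)) (zz : EuclideanSpace ℝ (Fin d1)),
      gradx f (xstar y zz) y + p • (xstar y zz - zz) = 0 := fun y zz =>
    grad_opt p f hf.1 y zz (xstar y zz) (fun x => hxstar y zz x)
  set x₁ := xstar y' z' with hx₁
  set x₂ := xstar ystar z with hx₂
  set x₃ := xstar ystar z' with hx₃
  have hlip : ‖x₃ - x₂‖ ≤ p / (p - l) * ‖z' - z‖ :=
    xstar_lip l p hl hpl f hglip ystar z' z x₃ x₂ (hopt ystar z') (hopt ystar z)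
  have hA := hxstar y' z x₁
  have hB := hxstar ystar z' x₂
  have hPz2 : fhat f p x₂ ystar z ≤ Pz := hPz.1 ⟨ystar, hystarY, rfl⟩
  rw [← hx₃] at hB
  simp only [fhat] at hA hB hPz2 ⊢
  -- algebraic identity
  have key1 : p * (‖x₁ - z'‖ ^ 2 - ‖x₁ - z‖ ^ 2) - p * (‖x₂ - z'‖ ^ 2 - ‖x₂ - z‖ ^ 2)
      = 2 * p * ⟪x₁ - x₃, z - z'⟫ + 2 * p * ⟪x₃ - x₂, z - z'⟫ := by
    simp only [norm_sub_sq_real, inner_sub_left, inner_sub_right]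
    ring
  have hn : ‖x₃ - x₁‖ ^ 2 = ‖x₁ - x₃‖ ^ 2 := by rw [norm_sub_rev]
  have hzz : ‖z - z'‖ = ‖z' - z‖ := norm_sub_rev _ _
  -- Cauchy–Schwarz bounds
  have f4 : -(p * (‖x₁ - x₃‖ * ‖z' - z‖)) ≤ p * ⟪x₁ - x₃, z - z'⟫ := by
    have h1 := abs_real_inner_le_norm (x₁ - x₃) (z - z')
    have h2 := neg_abs_le ⟪x₁ - x₃, z - z'⟫
    rw [hzz] at h1
    nlinarith
  have f3 : -(p * (p / (p - l)) * ‖z' - z‖ ^ 2) ≤ p * ⟪x₃ - x₂, z - z'⟫ := by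
    have h1 := abs_real_inner_le_norm (x₃ - x₂) (z - z')
    have h2 := neg_abs_le ⟪x₃ - x₂, z - z'⟫
    rw [hzz] at h1
    have h4 : ‖x₃ - x₂‖ * ‖z' - z‖ ≤ p / (p - l) * ‖z' - z‖ * ‖z' - z‖ :=
      mul_le_mul_of_nonneg_right hlip (norm_nonneg _)
    nlinarith [norm_nonneg (x₃ - x₂), norm_nonneg (z' - z)]
  -- AM–GM style bound
  have f5 : 2 * p * (‖x₁ - x₃‖ * ‖z' - z‖)
      ≤ 6 * p * β * ‖x₁ - x₃‖ ^ 2 + p / (6 * β) * ‖z' - z‖ ^ 2 := by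
    have h6β : (0:ℝ) < 6 * β := by linarith
    rw [← sub_nonneg]
    have hiden : 6 * p * β * ‖x₁ - x₃‖ ^ 2 + p / (6 * β) * ‖z' - z‖ ^ 2
        - 2 * p * (‖x₁ - x₃‖ * ‖z' - z‖)
        = p / (6 * β) * (6 * β * ‖x₁ - x₃‖ - ‖z' - z‖) ^ 2 := by
      field_simp
      ring
    rw [hiden]
    exact mul_nonneg (le_of_lt (div_pos hp h6β)) (sq_nonneg _)
  have mid : 2 * ((f x₁ y' + p / 2 * ‖x₁ - z'‖ ^ 2) - (f (xstar y' z) y' + p / 2 * ‖xstar y' z - z‖ ^ 2))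
      - 2 * ((f x₃ ystar + p / 2 * ‖x₃ - z'‖ ^ 2) - Pz)
      ≥ 2 * p * ⟪x₁ - x₃, z - z'⟫ + 2 * p * ⟪x₃ - x₂, z - z'⟫ := by
    linarith [hA, hB, hPz2, key1]
  rw [show ‖x₃ - x₁‖ = ‖x₁ - x₃‖ from norm_sub_rev _ _]
  linarith [mid, f3, f4, f5]
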